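/- The law P_X is of pure type: exactly one of the following holds — P_X is purely atomic (there is a countable set of full P_X-measure), P_X is absolutely continuous with respect to Lebesgue measure on ℝ, or P_X has no atoms and is singular with respect to Lebesgue measure. -/

import Mathlib

open MeasureTheory Filter Topology

namespace PureTypeAux

/-- The affine action of a pair `p = (β, ρ)` on `ℝ`: `y ↦ β + ρ y`. -/
noncomputable def actp (p : ℝ × ℝ) (y : ℝ) : ℝ := p.1 + p.2 * y

/-- The inverse pair, so that `actp (invp p)` inverts `actp p` when `p.2 ≠ 0`. -/
noncomputable def invp (p : ℝ × ℝ) : ℝ × ℝ := (-p.1 * p.2⁻¹, p.2⁻¹)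

/-- The action of a word (list of pairs), applied left-to-right. -/
noncomputable def actw (l : List (ℝ × ℝ)) (y : ℝ) : ℝ := l.foldl (fun z p => actp p z) y

lemma actw_nil (y : ℝ) : actw [] y = y := rfl

lemma actw_cons (p : ℝ × ℝ) (l : List (ℝ × ℝ)) (y : ℝ) :
    actw (p :: l) y = actw l (actp p y) := rfl

lemma actp_inv_left (p : ℝ × ℝ) (hp : p.2 ≠ 0) (y : ℝ) : actp (invp p) (actp p y) = y := by
  simp only [actp, invp]
  field_simp
  ring

lemma invp_snd_ne (p : ℝ × ℝ) (hp : p.2 ≠ 0) : (invp p).2 ≠ 0 := inv_ne_zero hp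

lemma measurable_actp (p : ℝ × ℝ) : Measurable (actp p) := by
  exact (measurable_id.const_mul p.2).const_add p.1

lemma measurable_actw (l : List (ℝ × ℝ)) : Measurable (actw l) := by
  induction l with
  | nil => exact measurable_id
  | cons p l ih =>
      have : actw (p :: l) = fun y => actw l (actp p y) := by
        funext y; exact actw_cons p l y
      rw [this]
      exact ih.comp (measurable_actp p)

lemma injective_actp {p : ℝ × ℝ} (hp : p.2 ≠ 0) : Function.Injective (actp p) := by
  intro x y hxy
  have := add_left_cancel hxy
  exact mul_left_cancel₀ hp this

lemma injective_actw {l : List (ℝ × ℝ)} (hl : ∀ p ∈ l, p.2 ≠ 0) :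
    Function.Injective (actw l) := by
  induction l with
  | nil => intro x y h; simpa [actw_nil] using h
  | cons p l ih =>
      intro x y h
      rw [actw_cons, actw_cons] at h
      have h1 := ih (fun q hq => hl q (List.mem_cons_of_mem p hq)) h
      exact injective_actp (hl p (List.mem_cons_self)) h1

lemma volume_preimage_actp {p : ℝ × ℝ} (hp : p.2 ≠ 0) {s : Set ℝ} (hs : volume s = 0) :
    volume (actp p ⁻¹' s) = 0 := by
  have hset : actp p ⁻¹' s = (p.2 * ·) ⁻¹' ((p.1 + ·) ⁻¹' s) := rfl
  rw [hset, Real.volume_preimage_mul_left hp, measure_preimage_add, hs, mul_zero]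

lemma volume_preimage_actw {l : List (ℝ × ℝ)} (hl : ∀ p ∈ l, p.2 ≠ 0) {s : Set ℝ}
    (hs : volume s = 0) : volume (actw l ⁻¹' s) = 0 := by
  induction l with
  | nil => exact hs
  | cons p l ih =>
      have hset : actw (p :: l) ⁻¹' s = actp p ⁻¹' (actw l ⁻¹' s) := rfl
      rw [hset]
      exact volume_preimage_actp (hl p (List.mem_cons_self))
        (ih (fun q hq => hl q (List.mem_cons_of_mem p hq)))

/-- The saturation of a Borel set under the countable group generated by a symmetric
countable family of invertible affine maps. -/
lemma star_exists (A : Set (ℝ × ℝ)) (hAc : A.Countable) (hA2 : ∀ p ∈ A, p.2 ≠ 0)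
    (hAinv : ∀ p ∈ A, invp p ∈ A) (B : Set ℝ) (hB : MeasurableSet B) :
    ∃ C : Set ℝ, MeasurableSet C ∧ B ⊆ C ∧
      (∀ p ∈ A, ∀ y : ℝ, y ∈ C ↔ actp p y ∈ C) ∧
      (volume B = 0 → volume C = 0) ∧ (B.Countable → C.Countable) := by
  haveI : Countable ↥A := hAc.to_subtype
  refine ⟨⋃ l : List ↥A, actw (l.map Subtype.val) ⁻¹' B, ?_, ?_, ?_, ?_, ?_⟩
  · exact MeasurableSet.iUnion fun l => (measurable_actw _) hB
  · intro y hy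
    exact Set.mem_iUnion.mpr ⟨[], by simpa [actw_nil] using hy⟩
  · intro p hp y
    constructor
    · intro hy
      obtain ⟨l, hl⟩ := Set.mem_iUnion.mp hy
      refine Set.mem_iUnion.mpr ⟨⟨invp p, hAinv p hp⟩ :: l, ?_⟩
      simp only [Set.mem_preimage, List.map_cons, actw_cons, actp_inv_left p (hA2 p hp)]
      exact hl
    · intro hy
      obtain ⟨l, hl⟩ := Set.mem_iUnion.mp hy
      refine Set.mem_iUnion.mpr ⟨⟨p, hp⟩ :: l, ?_⟩
      simp only [Set.mem_preimage, List.map_cons, actw_cons]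
      exact hl
  · intro hB0
    refine measure_iUnion_null fun l => ?_
    refine volume_preimage_actw ?_ hB0
    intro q hq
    obtain ⟨q', _, rfl⟩ := List.mem_map.mp hq
    exact hA2 _ q'.2
  · intro hBc
    refine Set.countable_iUnion fun l => ?_
    refine hBc.preimage (injective_actw ?_)
    intro q hq
    obtain ⟨q', _, rfl⟩ := List.mem_map.mp hq
    exact hA2 _ q'.2

end PureTypeAux

open PureTypeAux

/-- **Pure type law.** Exactly one of the following holds for the law `P_X` of the
random self-similar series `X(ω) = ∑_{n≥0} r_n(ω) b(T^n ω)`: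
it is purely atomic, it is absolutely continuous w.r.t. Lebesgue measure, or it is
continuous (no atoms) and singular w.r.t. Lebesgue measure. -/
theorem pure_type_law
    {Ω : Type*} [MeasurableSpace Ω] (P : Measure Ω) [IsProbabilityMeasure P]
    (T : Ω → Ω) (hT : Ergodic T P)
    (b r : Ω → ℝ) (hb : Measurable b) (hr : Measurable r)
    (hrpos : ∀ ω, 0 < r ω)
    (hbInt : Integrable b P)
    (hlogInt : Integrable (fun ω => Real.log (r ω)) P)
    (hlogNeg : ∫ ω, Real.log (r ω) ∂P < 0)
    (hScount : Set.Countable {p : ℝ × ℝ | ∃ ω, (b ω, r ω) = p})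
    (hSpos : ∀ p ∈ {p : ℝ × ℝ | ∃ ω, (b ω, r ω) = p}, 0 < P {ω | (b ω, r ω) = p})
    (X : Ω → ℝ) (hX : Measurable X)
    (hXsum : ∀ᵐ ω ∂P,
      HasSum (fun n : ℕ => (∏ k ∈ Finset.range n, r (T^[k] ω)) * b (T^[n] ω)) (X ω)) :
    ((∃ s : Set ℝ, s.Countable ∧ P.map X s = 1)
        ∧ ¬ (P.map X ≪ volume)
        ∧ ¬ ((∀ a : ℝ, P.map X {a} = 0) ∧ P.map X ⟂ₘ volume))
    ∨ (¬ (∃ s : Set ℝ, s.Countable ∧ P.map X s = 1)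
        ∧ (P.map X ≪ volume)
        ∧ ¬ ((∀ a : ℝ, P.map X {a} = 0) ∧ P.map X ⟂ₘ volume))
    ∨ (¬ (∃ s : Set ℝ, s.Countable ∧ P.map X s = 1)
        ∧ ¬ (P.map X ≪ volume)
        ∧ ((∀ a : ℝ, P.map X {a} = 0) ∧ P.map X ⟂ₘ volume)) := by
  classical
  haveI hprob : IsProbabilityMeasure (P.map X) := Measure.isProbabilityMeasure_map hX.aemeasurable
  set μ : Measure ℝ := P.map X with hμdef
  -- the countable symmetric family of affine maps
  set S : Set (ℝ × ℝ) := {p : ℝ × ℝ | ∃ ω, (b ω, r ω) = p} with hSdef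
  set A : Set (ℝ × ℝ) := S ∪ invp '' S with hAdef
  have hS2 : ∀ p ∈ S, p.2 ≠ 0 := by
    rintro p ⟨ω, rfl⟩
    exact ne_of_gt (hrpos ω)
  have hAc : A.Countable := hScount.union (hScount.image _)
  have hA2 : ∀ p ∈ A, p.2 ≠ 0 := by
    rintro p (hp | ⟨q, hq, rfl⟩)
    · exact hS2 p hp
    · exact invp_snd_ne q (hS2 q hq)
  have hAinv : ∀ p ∈ A, invp p ∈ A := by
    rintro p (hp | ⟨q, hq, rfl⟩)
    · exact Or.inr ⟨p, hp, rfl⟩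
    · have : invp (invp q) = q := by
        have hq2 := hS2 q hq
        simp only [invp]
        ext <;> field_simp
      rw [this]
      exact Or.inl hq
  -- the a.e. functional equation
  have hfe : ∀ᵐ ω ∂P, X ω = b ω + r ω * X (T ω) := by
    have h2 : ∀ᵐ ω ∂P, HasSum
        (fun n : ℕ => (∏ k ∈ Finset.range n, r (T^[k] (T ω))) * b (T^[n] (T ω))) (X (T ω)) :=
      hT.quasiMeasurePreserving.ae hXsum
    filter_upwards [hXsum, h2] with ω h1 h3
    have h4 := h3.mul_left (r ω)
    have h5 : (fun n : ℕ => r ω * ((∏ k ∈ Finset.range n, r (T^[k] (T ω))) * b (T^[n] (T ω))))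
        = fun n : ℕ => (∏ k ∈ Finset.range (n + 1), r (T^[k] ω)) * b (T^[n + 1] ω) := by
      funext n
      rw [Finset.prod_range_succ']
      have hiter : ∀ k : ℕ, T^[k + 1] ω = T^[k] (T ω) := fun k =>
        Function.iterate_succ_apply T k ω
      simp only [hiter, Function.iterate_zero_apply]
      ring
    rw [h5] at h4
    have h6 := (hasSum_nat_add_iff (f := fun n : ℕ =>
        (∏ k ∈ Finset.range n, r (T^[k] ω)) * b (T^[n] ω)) 1).mp h4
    have h7 : X ω = r ω * X (T ω) +
        ∑ i ∈ Finset.range 1, (∏ k ∈ Finset.range i, r (T^[k] ω)) * b (T^[i] ω) :=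
      h1.unique h6
    rw [h7, Finset.sum_range_one]
    simp only [Finset.range_zero, Finset.prod_empty, Function.iterate_zero_apply, one_mul]
    ring
  -- the ergodicity engine: invariant Borel sets have measure 0 or 1
  have key : ∀ C : Set ℝ, MeasurableSet C → (∀ p ∈ S, ∀ y : ℝ, y ∈ C ↔ actp p y ∈ C) →
      μ C = 0 ∨ μ C = 1 := by
    intro C hC hinv
    have hmap : μ C = P (X ⁻¹' C) := Measure.map_apply hX hC
    have hinvset : T ⁻¹' (X ⁻¹' C) =ᵐ[P] (X ⁻¹' C) := by
      rw [Filter.eventuallyEq_set]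
      filter_upwards [hfe] with ω hω
      have hpS : ((b ω, r ω) : ℝ × ℝ) ∈ S := ⟨ω, rfl⟩
      have := hinv _ hpS (X (T ω))
      simp only [Set.mem_preimage]
      constructor
      · intro h
        have : actp (b ω, r ω) (X (T ω)) ∈ C := (hinv _ hpS (X (T ω))).mp h
        simpa [actp, ← hω] using this
      · intro h
        have h' : actp (b ω, r ω) (X (T ω)) ∈ C := by simpa [actp, ← hω] using h
        exact (hinv _ hpS (X (T ω))).mpr h'
    rcases hT.quasiErgodic.ae_empty_or_univ₀ (hX hC).nullMeasurableSet hinvset with h | h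
    · left
      rw [hmap]
      exact ae_eq_empty.mp h
    · right
      rw [hmap, measure_congr h, measure_univ]
  -- the set of atoms
  set Δ : Set ℝ := {y : ℝ | μ {y} ≠ 0} with hΔdef
  have hΔc : Δ.Countable := by
    have := Measure.countable_meas_pos_of_disjoint_iUnion (μ := μ)
      (As := fun y : ℝ => ({y} : Set ℝ)) (fun y => measurableSet_singleton y)
      (fun x y hxy => by
        simp only [Function.onFun, Set.disjoint_singleton]
        exact hxy)
    refine this.mono ?_
    intro y hy
    exact pos_iff_ne_zero.mpr hy
  -- saturate the atoms
  obtain ⟨CΔ, hCΔm, hCΔsub, hCΔinv, _, hCΔcount⟩ :=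
    star_exists A hAc hA2 hAinv Δ hΔc.measurableSet
  have hCΔS : ∀ p ∈ S, ∀ y : ℝ, y ∈ CΔ ↔ actp p y ∈ CΔ := fun p hp =>
    hCΔinv p (Or.inl hp)
  have hCΔcnt : CΔ.Countable := hCΔcount hΔc
  -- helper: countable sets are null for atomless measures
  have hcount0 : ∀ s : Set ℝ, s.Countable → (∀ a : ℝ, μ {a} = 0) → μ s = 0 := by
    intro s hs h
    have : μ (⋃ x ∈ s, ({x} : Set ℝ)) = 0 :=
      (measure_biUnion_null_iff hs).mpr fun a _ => h a
    simpa [Set.biUnion_of_singleton] using this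
  rcases key CΔ hCΔm hCΔS with hΔ0 | hΔ1
  · -- no atoms: dichotomy between a.c. and singular continuous
    have hnoatom : ∀ a : ℝ, μ {a} = 0 := by
      intro a
      by_contra h
      have ha : a ∈ Δ := h
      have : μ {a} ≤ μ CΔ := measure_mono (Set.singleton_subset_iff.mpr (hCΔsub ha))
      rw [hΔ0] at this
      exact h (le_antisymm this zero_le)
    have hNotAtomic : ¬ (∃ s : Set ℝ, s.Countable ∧ μ s = 1) := by
      rintro ⟨s, hsc, hs1⟩
      rw [hcount0 s hsc hnoatom] at hs1
      exact zero_ne_one hs1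
    -- the carrier of the singular part
    obtain ⟨S₀, hS₀m, hsing0, hvol0⟩ := Measure.mutuallySingular_singularPart μ volume
    obtain ⟨CN, hCNm, hCNsub, hCNinv, hCNnull, _⟩ :=
      star_exists A hAc hA2 hAinv S₀ᶜ hS₀m.compl
    have hCNS : ∀ p ∈ S, ∀ y : ℝ, y ∈ CN ↔ actp p y ∈ CN := fun p hp =>
      hCNinv p (Or.inl hp)
    have hCNvol : volume CN = 0 := hCNnull hvol0
    rcases key CN hCNm hCNS with hN0 | hN1
    · -- absolutely continuous case
      right; left
      have hsingzero : μ.singularPart volume = 0 := by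
        have h1 : μ.singularPart volume Set.univ = 0 := by
          have hsub : (Set.univ : Set ℝ) ⊆ S₀ ∪ S₀ᶜ := by
            rw [Set.union_compl_self]
          have hle := (measure_union_le (μ := μ.singularPart volume) S₀ S₀ᶜ)
          have h2 : μ.singularPart volume S₀ᶜ ≤ μ S₀ᶜ :=
            Measure.le_iff'.mp (Measure.singularPart_le μ volume) S₀ᶜ
          have h3 : μ S₀ᶜ ≤ μ CN := measure_mono hCNsub
          have h4 : μ.singularPart volume Set.univ ≤
              μ.singularPart volume S₀ + μ.singularPart volume S₀ᶜ := by
            calc μ.singularPart volume Set.univ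
                ≤ μ.singularPart volume (S₀ ∪ S₀ᶜ) := measure_mono hsub
              _ ≤ _ := hle
          rw [hsing0, zero_add] at h4
          have : μ.singularPart volume Set.univ ≤ 0 := by
            calc μ.singularPart volume Set.univ ≤ μ S₀ᶜ := h4.trans h2
              _ ≤ μ CN := h3
              _ = 0 := hN0
          exact le_antisymm this zero_le
        exact Measure.measure_univ_eq_zero.mp h1
      have hAC : μ ≪ volume := by
        have hdec := μ.haveLebesgueDecomposition_add volume
        rw [hsingzero, zero_add] at hdec
        rw [hdec]
        exact withDensity_absolutelyContinuous volume _
      refine ⟨hNotAtomic, hAC, ?_⟩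
      rintro ⟨-, hsing⟩
      obtain ⟨t, htm, hμt, hvt⟩ := hsing
      have h1 : μ tᶜ = 0 := hAC hvt
      have : μ Set.univ = 0 := by
        have hsub : (Set.univ : Set ℝ) ⊆ t ∪ tᶜ := by rw [Set.union_compl_self]
        have := (measure_mono hsub).trans (measure_union_le (μ := μ) t tᶜ)
        rw [hμt, h1, add_zero] at this
        exact le_antisymm this zero_le
      rw [measure_univ] at this
      exact one_ne_zero this
    · -- singular continuous case
      right; right
      have hNotAC : ¬ (μ ≪ volume) := by
        intro hAC
        have := hAC hCNvol
        rw [hN1] at this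
        exact one_ne_zero this
      refine ⟨hNotAtomic, hNotAC, hnoatom, ?_⟩
      refine ⟨CNᶜ, hCNm.compl, ?_, ?_⟩
      · have : μ CNᶜ = 1 - μ CN := by
          rw [measure_compl hCNm (measure_ne_top μ CN), measure_univ]
        rw [this, hN1, tsub_self]
      · simpa using hCNvol
  · -- atomic case
    left
    have hvolCΔ : volume CΔ = 0 := hCΔcnt.measure_zero volume
    refine ⟨⟨CΔ, hCΔcnt, hΔ1⟩, ?_, ?_⟩
    · intro hAC
      have := hAC hvolCΔ
      rw [hΔ1] at this
      exact one_ne_zero this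
    · rintro ⟨hcont, -⟩
      have := hcount0 CΔ hCΔcnt hcont
      rw [hΔ1] at this
      exact one_ne_zero this
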